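/- Let α₁, α₂, β₁, β₂ : [0,1] → ℝ be C¹ and set β = α₁β₂ + α₂β₁. Let b : [0,1] → ℝ be C², and let c₀, c₁ : [0,1] → ℝ be C¹ with c₀(0) = 1, c₀′(0) = 0, c₁(0) = 0, c₁′(0) = 1. Define f⁽¹⁾(ξ₁,ξ₂) = b(ξ₂)c₀(ξ₁) − β₁(ξ₂)b′(ξ₂)c₁(ξ₁) and f⁽²⁾(ξ₁,ξ₂) = b(ξ₁)c₀(ξ₂) − β₂(ξ₁)b′(ξ₁)c₁(ξ₂) on [0,1]². Then for all ξ ∈ [0,1]: f⁽¹⁾(0,ξ) = f⁽²⁾(ξ,0) = b(ξ), and α₁(ξ)∂₂f⁽²⁾(ξ,0) + α₂(ξ)∂₁f⁽¹⁾(0,ξ) + β(ξ)∂₂f⁽¹⁾(0,ξ) = 0. -/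

import Mathlib

/-- Partial derivative with respect to the first argument. -/
noncomputable def pd1 {E : Type*} [NormedAddCommGroup E] [NormedSpace ℝ E]
    (f : ℝ × ℝ → E) (x : ℝ × ℝ) : E := deriv (fun s => f (s, x.2)) x.1

/-- Partial derivative with respect to the second argument. -/
noncomputable def pd2 {E : Type*} [NormedAddCommGroup E] [NormedSpace ℝ E]
    (f : ℝ × ℝ → E) (x : ℝ × ℝ) : E := deriv (fun s => f (x.1, s)) x.2

/-- The pair of pullbacks of a trace-type edge basis function satisfies the trace
identity `f⁽¹⁾(0,ξ) = f⁽²⁾(ξ,0) = b(ξ)` and the `C¹` gluing condition with gluing data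
`α₁, α₂` and `β = α₁β₂ + α₂β₁`. -/
theorem stmt7 (α₁ α₂ β₁ β₂ : ℝ → ℝ)
    (hα₁ : ContDiff ℝ 1 α₁) (hα₂ : ContDiff ℝ 1 α₂)
    (hβ₁ : ContDiff ℝ 1 β₁) (hβ₂ : ContDiff ℝ 1 β₂)
    (β : ℝ → ℝ) (hβ : β = fun ξ => α₁ ξ * β₂ ξ + α₂ ξ * β₁ ξ)
    (b : ℝ → ℝ) (hb : ContDiff ℝ 2 b)
    (c₀ c₁ : ℝ → ℝ) (hc₀ : ContDiff ℝ 1 c₀) (hc₁ : ContDiff ℝ 1 c₁)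
    (hc₀0 : c₀ 0 = 1) (hc₀'0 : deriv c₀ 0 = 0)
    (hc₁0 : c₁ 0 = 0) (hc₁'0 : deriv c₁ 0 = 1)
    (f1 f2 : ℝ × ℝ → ℝ)
    (hf1 : f1 = fun ξ => b ξ.2 * c₀ ξ.1 - β₁ ξ.2 * deriv b ξ.2 * c₁ ξ.1)
    (hf2 : f2 = fun ξ => b ξ.1 * c₀ ξ.2 - β₂ ξ.1 * deriv b ξ.1 * c₁ ξ.2) :
    ∀ ξ ∈ Set.Icc (0:ℝ) 1,
      f1 (0, ξ) = b ξ ∧ f2 (ξ, 0) = b ξ ∧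
      α₁ ξ * pd2 f2 (ξ, 0) + α₂ ξ * pd1 f1 (0, ξ) + β ξ * pd2 f1 (0, ξ) = 0 := by
  intro ξ _
  have hb1 : ContDiff ℝ 1 b := hb.of_le (by norm_num)
  have hbd : Differentiable ℝ b := hb1.differentiable one_ne_zero
  have hb'd : Differentiable ℝ (deriv b) :=
    (hb.iterate_deriv' 1 1).differentiable one_ne_zero
  have hc₀d : Differentiable ℝ c₀ := hc₀.differentiable one_ne_zero
  have hc₁d : Differentiable ℝ c₁ := hc₁.differentiable one_ne_zero
  have hβ₁d : Differentiable ℝ β₁ := hβ₁.differentiable one_ne_zero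
  have hβ₂d : Differentiable ℝ β₂ := hβ₂.differentiable one_ne_zero
  refine ⟨by simp [hf1, hc₀0, hc₁0], by simp [hf2, hc₀0, hc₁0], ?_⟩
  have h1 : pd1 f1 (0, ξ) = - (β₁ ξ * deriv b ξ) := by
    simp only [pd1, hf1]
    rw [deriv_fun_sub ((hc₀d 0).const_mul (b ξ)) ((hc₁d 0).const_mul _)]
    rw [deriv_const_mul _ (hc₀d 0), deriv_const_mul _ (hc₁d 0), hc₀'0, hc₁'0]
    ring
  have h2 : pd2 f2 (ξ, 0) = - (β₂ ξ * deriv b ξ) := by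
    simp only [pd2, hf2]
    rw [deriv_fun_sub ((hc₀d 0).const_mul (b ξ)) ((hc₁d 0).const_mul _)]
    rw [deriv_const_mul _ (hc₀d 0), deriv_const_mul _ (hc₁d 0), hc₀'0, hc₁'0]
    ring
  have h3 : pd2 f1 (0, ξ) = deriv b ξ := by
    simp only [pd2, hf1]
    have : (fun s => b s * c₀ 0 - β₁ s * deriv b s * c₁ 0) = b := by
      funext s; simp [hc₀0, hc₁0]
    rw [this]
  rw [h1, h2, h3, hβ]
  ring
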